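/- Let s ∈ (1/2, 1). For q ∈ (s − 1/2, s] define B(q) := ∫₀¹ (z^q − 1)(1 − z^{2s−1−q})/(1−z)^{1+2s} dz. Then for each such q the integrand is Lebesgue integrable on (0,1), B(q) is finite, and B is strictly increasing on (s − 1/2, s]: B(q₁) < B(q₂) whenever s − 1/2 < q₁ < q₂ ≤ s. -/

import Mathlib

open MeasureTheory

lemma stmt11_aux_integrable (s q : ℝ) (hs1 : 1/2 < s) (hs2 : s < 1)
    (hq1 : s - 1/2 < q) (hq2 : q ≤ s) :
    IntegrableOn
      (fun z : ℝ => (z ^ q - 1) * (1 - z ^ (2*s - 1 - q)) / (1 - z) ^ (1 + 2*s))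
      (Set.Ioo 0 1) := by
  set e : ℝ := 2*s - 1 - q with he
  have hq0 : 0 < q := by linarith
  have hq1' : q ≤ 1 := by linarith
  have he1 : -1 < e := by rw [he]; linarith
  have he2 : e ≤ 1 := by rw [he]; linarith
  have he3 : -(1/2 : ℝ) < e := by rw [he]; linarith
  -- the dominating function
  set g : ℝ → ℝ := fun z => 2 ^ (1 + 2*s) * (1 + z ^ e) + 2 * (1 - z) ^ (1 - 2*s) with hg
  have hg_int : IntegrableOn g (Set.Ioo 0 1) := by
    have h1 : IntegrableOn (fun z : ℝ => z ^ e) (Set.Ioo 0 1) := by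
      have := (intervalIntegral.intervalIntegrable_rpow' (a := 0) (b := 1) he1).1
      exact this.mono_set Set.Ioo_subset_Ioc_self
    have h2 : IntegrableOn (fun z : ℝ => (1 - z) ^ (1 - 2*s)) (Set.Ioo 0 1) := by
      have h0 : IntervalIntegrable (fun x : ℝ => x ^ (1 - 2*s)) volume 0 1 :=
        intervalIntegral.intervalIntegrable_rpow' (by linarith)
      have := (h0.comp_sub_left 1).symm.1
      norm_num at this
      exact this.mono_set Set.Ioo_subset_Ioc_self
    have hconst : IntegrableOn (fun _ : ℝ => (1:ℝ)) (Set.Ioo 0 1) :=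
      integrableOn_const (by simp [Real.volume_Ioo]) (by simp)
    exact ((hconst.add h1).const_mul _).add (h2.const_mul 2)
  have hmeas : ContinuousOn
      (fun z : ℝ => (z ^ q - 1) * (1 - z ^ (2*s - 1 - q)) / (1 - z) ^ (1 + 2*s))
      (Set.Ioo 0 1) := by
    apply ContinuousOn.div
    · exact ((continuousOn_id.rpow_const (fun x hx => Or.inl (ne_of_gt hx.1))).sub
        continuousOn_const).mul
        (continuousOn_const.sub
          (continuousOn_id.rpow_const (fun x hx => Or.inl (ne_of_gt hx.1))))
    · exact (continuousOn_const.sub continuousOn_id).rpow_const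
        (fun x hx => Or.inl (by intro h; simp only [Pi.sub_apply, id] at h; nlinarith [hx.2]))
    · intro x hx
      exact (Real.rpow_pos_of_pos (by linarith [hx.2]) _).ne'
  refine Integrable.mono' hg_int (hmeas.aestronglyMeasurable measurableSet_Ioo) ?_
  rw [ae_restrict_iff' measurableSet_Ioo]
  refine ae_of_all _ fun z hz => ?_
  obtain ⟨hz0, hz1⟩ := hz
  have hzle : z ≤ 1 := le_of_lt hz1
  have hD : (0:ℝ) < (1 - z) ^ (1 + 2*s) := Real.rpow_pos_of_pos (by linarith) _
  have hze : (0:ℝ) < z ^ e := Real.rpow_pos_of_pos hz0 _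
  have hzq : (0:ℝ) < z ^ q := Real.rpow_pos_of_pos hz0 _
  have hzq1 : z ^ q ≤ 1 := Real.rpow_le_one hz0.le hzle hq0.le
  have hnorm : ‖(z ^ q - 1) * (1 - z ^ (2*s - 1 - q)) / (1 - z) ^ (1 + 2*s)‖
      = |z ^ q - 1| * |1 - z ^ e| / (1 - z) ^ (1 + 2*s) := by
    rw [Real.norm_eq_abs, abs_div, abs_mul, abs_of_pos hD]
  rw [hnorm]
  have hg2 : (0:ℝ) ≤ (1 - z) ^ (1 - 2*s) := (Real.rpow_pos_of_pos (by linarith) _).le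
  have hg1 : (0:ℝ) ≤ 2 ^ (1 + 2*s) * (1 + z ^ e) := by positivity
  rcases le_or_gt z (1/2) with hhalf | hhalf
  · -- z ≤ 1/2 : bound by 2^(1+2s) * (1 + z^e)
    have hDlb : ((2:ℝ) ^ (1 + 2*s))⁻¹ ≤ (1 - z) ^ (1 + 2*s) := by
      have h12 : ((1:ℝ)/2) ^ (1 + 2*s) ≤ (1 - z) ^ (1 + 2*s) :=
        Real.rpow_le_rpow (by norm_num) (by linarith) (by linarith)
      calc ((2:ℝ) ^ (1 + 2*s))⁻¹ = ((2:ℝ)⁻¹) ^ (1 + 2*s) := by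
            rw [Real.inv_rpow (by norm_num)]
        _ = ((1:ℝ)/2) ^ (1 + 2*s) := by norm_num
        _ ≤ _ := h12
    have hnum : |z ^ q - 1| * |1 - z ^ e| ≤ 1 + z ^ e := by
      have h1 : |z ^ q - 1| ≤ 1 := by rw [abs_sub_comm, abs_of_nonneg (by linarith)]; linarith
      have h2 : |1 - z ^ e| ≤ 1 + z ^ e := (abs_sub _ _).trans (by
        rw [abs_one, abs_of_pos hze])
      calc |z ^ q - 1| * |1 - z ^ e| ≤ 1 * (1 + z ^ e) :=
            mul_le_mul h1 h2 (abs_nonneg _) (by norm_num)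
        _ = 1 + z ^ e := one_mul _
    have key : |z ^ q - 1| * |1 - z ^ e| / (1 - z) ^ (1 + 2*s)
        ≤ 2 ^ (1 + 2*s) * (1 + z ^ e) := by
      rw [div_le_iff₀ hD]
      calc |z ^ q - 1| * |1 - z ^ e| ≤ 1 + z ^ e := hnum
        _ = (2 ^ (1 + 2*s) * (1 + z ^ e)) * ((2:ℝ) ^ (1 + 2*s))⁻¹ := by
            field_simp
        _ ≤ (2 ^ (1 + 2*s) * (1 + z ^ e)) * ((1 - z) ^ (1 + 2*s)) :=
            mul_le_mul_of_nonneg_left hDlb hg1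
    calc |z ^ q - 1| * |1 - z ^ e| / (1 - z) ^ (1 + 2*s)
        ≤ 2 ^ (1 + 2*s) * (1 + z ^ e) := key
      _ ≤ g z := by simp only [hg]; linarith
  · -- 1/2 < z : bound by 2 * (1-z)^(1-2s)
    have hA : |z ^ q - 1| ≤ 1 - z := by
      rw [abs_sub_comm, abs_of_nonneg (by linarith)]
      have : z ^ (1:ℝ) ≤ z ^ q := Real.rpow_le_rpow_of_exponent_ge hz0 hzle hq1'
      rw [Real.rpow_one] at this; linarith
    have hB : |1 - z ^ e| ≤ 2 * (1 - z) := by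
      rcases le_or_gt 0 e with he0 | he0
      · have hle1 : z ^ e ≤ 1 := Real.rpow_le_one hz0.le hzle he0
        have : z ^ (1:ℝ) ≤ z ^ e := Real.rpow_le_rpow_of_exponent_ge hz0 hzle he2
        rw [Real.rpow_one] at this
        rw [abs_of_nonneg (by linarith)]; linarith
      · have hge1 : 1 ≤ z ^ e :=
          Real.one_le_rpow_of_pos_of_le_one_of_nonpos hz0 hzle he0.le
        rw [abs_sub_comm, abs_of_nonneg (by linarith)]
        have hzne : z ^ e * z ^ (-e) = 1 := by
          rw [← Real.rpow_add hz0]; simp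
        have hmz : z ≤ z ^ (-e) := by
          have := Real.rpow_le_rpow_of_exponent_ge hz0 hzle (by linarith : -e ≤ (1:ℝ))
          rwa [Real.rpow_one] at this
        have hmz1 : z ^ (-e) ≤ 1 := Real.rpow_le_one hz0.le hzle (by linarith)
        have hze2 : z ^ e ≤ 2 := by
          have h1 : z ^ e ≤ z ^ (-(1/2:ℝ)) :=
            Real.rpow_le_rpow_of_exponent_ge hz0 hzle he3.le
          have h2 : z ^ (-(1/2:ℝ)) = (z ^ ((1/2):ℝ))⁻¹ := Real.rpow_neg hz0.le _
          have h3 : (1/2:ℝ) ≤ z ^ ((1/2):ℝ) := by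
            have h4 : (1/2:ℝ) ^ ((1/2):ℝ) ≤ z ^ ((1/2):ℝ) :=
              Real.rpow_le_rpow (by norm_num) hhalf.le (by norm_num)
            have h5 : (1/2:ℝ) ≤ (1/2:ℝ) ^ ((1/2):ℝ) := by
              have := Real.rpow_le_rpow_of_exponent_ge (by norm_num : (0:ℝ) < 1/2)
                (by norm_num : (1/2:ℝ) ≤ 1) (by norm_num : (1/2:ℝ) ≤ 1)
              rwa [Real.rpow_one] at this
            linarith
          have h6 : (z ^ ((1/2):ℝ))⁻¹ ≤ 2 := by
            rw [inv_le_comm₀ (by positivity) (by norm_num)]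
            linarith
          rw [h2] at h1; linarith
        have hprod : (0:ℝ) ≤ (2 - z ^ e) * (1 - z ^ (-e)) :=
          mul_nonneg (by linarith) (by linarith)
        nlinarith [hzne, hprod, hmz]
    have hnum : |z ^ q - 1| * |1 - z ^ e| ≤ 2 * (1 - z) ^ (2:ℝ) := by
      have h2 : (1 - z) ^ (2:ℝ) = (1 - z) * (1 - z) := by
        rw [show (2:ℝ) = ((2:ℕ):ℝ) by norm_num, Real.rpow_natCast]; ring
      calc |z ^ q - 1| * |1 - z ^ e| ≤ (1 - z) * (2 * (1 - z)) :=
            mul_le_mul hA hB (abs_nonneg _) (by linarith)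
        _ = 2 * (1 - z) ^ (2:ℝ) := by rw [h2]; ring
    have key : |z ^ q - 1| * |1 - z ^ e| / (1 - z) ^ (1 + 2*s)
        ≤ 2 * (1 - z) ^ (1 - 2*s) := by
      rw [div_le_iff₀ hD]
      have hexp : (1 - z) ^ (1 - 2*s) * (1 - z) ^ (1 + 2*s) = (1 - z) ^ (2:ℝ) := by
        rw [← Real.rpow_add (by linarith)]; norm_num
      calc |z ^ q - 1| * |1 - z ^ e| ≤ 2 * (1 - z) ^ (2:ℝ) := hnum
        _ = 2 * (1 - z) ^ (1 - 2*s) * (1 - z) ^ (1 + 2*s) := by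
            rw [mul_assoc, hexp]
    calc |z ^ q - 1| * |1 - z ^ e| / (1 - z) ^ (1 + 2*s)
        ≤ 2 * (1 - z) ^ (1 - 2*s) := key
      _ ≤ g z := by simp only [hg]; linarith

theorem stmt11 (s : ℝ) (hs1 : 1/2 < s) (hs2 : s < 1) :
    (∀ q : ℝ, s - 1/2 < q → q ≤ s →
      IntegrableOn
        (fun z : ℝ => (z ^ q - 1) * (1 - z ^ (2*s - 1 - q)) / (1 - z) ^ (1 + 2*s))
        (Set.Ioo 0 1)) ∧
    ∀ q₁ q₂ : ℝ, s - 1/2 < q₁ → q₁ < q₂ → q₂ ≤ s →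
      (∫ z in Set.Ioo (0:ℝ) 1,
        (z ^ q₁ - 1) * (1 - z ^ (2*s - 1 - q₁)) / (1 - z) ^ (1 + 2*s)) <
      ∫ z in Set.Ioo (0:ℝ) 1,
        (z ^ q₂ - 1) * (1 - z ^ (2*s - 1 - q₂)) / (1 - z) ^ (1 + 2*s) := by
  constructor
  · intro q hq1 hq2
    exact stmt11_aux_integrable s q hs1 hs2 hq1 hq2
  · intro q₁ q₂ hq1 hq12 hq2
    have int₁ := stmt11_aux_integrable s q₁ hs1 hs2 hq1 (by linarith)
    have int₂ := stmt11_aux_integrable s q₂ hs1 hs2 (by linarith) hq2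
    set F : ℝ → ℝ → ℝ := fun q z =>
      (z ^ q - 1) * (1 - z ^ (2*s - 1 - q)) / (1 - z) ^ (1 + 2*s) with hF
    have hpos : ∀ z ∈ Set.Ioo (0:ℝ) 1, 0 < F q₂ z - F q₁ z := by
      intro z hz
      obtain ⟨hz0, hz1⟩ := hz
      have hD : (0:ℝ) < (1 - z) ^ (1 + 2*s) := Real.rpow_pos_of_pos (by linarith) _
      have expand : ∀ q' : ℝ, (z ^ q' - 1) * (1 - z ^ (2*s - 1 - q'))
          = z ^ q' + z ^ (2*s - 1 - q') - z ^ (2*s - 1) - 1 := by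
        intro q'
        have h1 : z ^ q' * z ^ (2*s - 1 - q') = z ^ (2*s - 1) := by
          rw [← Real.rpow_add hz0]; ring_nf
        have : (z ^ q' - 1) * (1 - z ^ (2*s - 1 - q'))
            = z ^ q' + z ^ (2*s - 1 - q') - z ^ q' * z ^ (2*s - 1 - q') - 1 := by ring
        rw [this, h1]
      have hdiff : F q₂ z - F q₁ z
          = ((1 - z ^ (q₂ - q₁)) * (z ^ (2*s - 1 - q₂) - z ^ q₁)) / (1 - z) ^ (1 + 2*s) := by
        simp only [hF]
        rw [div_sub_div_same]
        congr 1
        rw [expand q₁, expand q₂]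
        have h1 : z ^ (q₂ - q₁) * z ^ q₁ = z ^ q₂ := by
          rw [← Real.rpow_add hz0]; ring_nf
        have h2 : z ^ (q₂ - q₁) * z ^ (2*s - 1 - q₂) = z ^ (2*s - 1 - q₁) := by
          rw [← Real.rpow_add hz0]; ring_nf
        nlinarith [h1, h2]
      rw [hdiff]
      apply div_pos _ hD
      apply mul_pos
      · have : z ^ (q₂ - q₁) < 1 := Real.rpow_lt_one hz0.le hz1 (by linarith)
        linarith
      · have : z ^ q₁ < z ^ (2*s - 1 - q₂) :=
          Real.rpow_lt_rpow_of_exponent_gt hz0 hz1 (by linarith)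
        linarith
    have hint : IntegrableOn (fun z => F q₂ z - F q₁ z) (Set.Ioo (0:ℝ) 1) := int₂.sub int₁
    have hlt : 0 < ∫ z in Set.Ioo (0:ℝ) 1, (F q₂ z - F q₁ z) := by
      rw [MeasureTheory.setIntegral_pos_iff_support_of_nonneg_ae _ hint]
      · have hsub : Set.Ioo (0:ℝ) 1 ⊆ Function.support (fun z => F q₂ z - F q₁ z) ∩ Set.Ioo 0 1 := by
          intro z hz
          exact ⟨ne_of_gt (hpos z hz), hz⟩
        calc (0:ENNReal) < volume (Set.Ioo (0:ℝ) 1) := by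
              simp [Real.volume_Ioo]
          _ ≤ _ := measure_mono hsub
      · exact (ae_restrict_iff' measurableSet_Ioo).2
          (ae_of_all _ fun z hz => le_of_lt (hpos z hz))
    have hsub := MeasureTheory.integral_sub (int₂ : Integrable (F q₂) _)
      (int₁ : Integrable (F q₁) _)
    rw [hsub] at hlt
    have hFlt : (∫ z in Set.Ioo (0:ℝ) 1, F q₁ z) < ∫ z in Set.Ioo (0:ℝ) 1, F q₂ z := by
      linarith
    exact hFlt
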